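/- In R = Q[x_1,...,x_9], the ideal I = (x_1x_2, x_1x_3, x_2x_4, x_4x_5, x_4x_6, x_2x_7, x_6x_8, x_6x_9) satisfies Rad I = Rad(x_1x_2, x_1x_3 + x_2x_4, x_2x_7 + x_4x_6, x_4x_5 + x_6x_8, x_6x_9); in particular ara I ≤ 5. -/
import Mathlib
set_option maxHeartbeats 1000000


open MvPolynomial

/-- The arithmetical rank of an ideal: the least number of elements generating it up to
radical. -/
noncomputable def ara {R : Type*} [CommRing R] (J : Ideal R) : ℕ :=
  sInf {s : ℕ | ∃ f : Fin s → R,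
    Ideal.radical (Ideal.span (Set.range f)) = Ideal.radical J}

-- The variables `x_1, …, x_9` are `X 0, …, X 8`.
theorem example1 (I : Ideal (MvPolynomial (Fin 9) ℚ))
    (hI : I = Ideal.span
      {X 0 * X 1, X 0 * X 2, X 1 * X 3, X 3 * X 4, X 3 * X 5, X 1 * X 6, X 5 * X 7,
        X 5 * X 8}) :
    Ideal.radical I = Ideal.radical (Ideal.span
      {X 0 * X 1, X 0 * X 2 + X 1 * X 3, X 1 * X 6 + X 3 * X 5, X 3 * X 4 + X 5 * X 7,
        X 5 * X 8}) ∧ ara I ≤ 5 := by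
  set R := MvPolynomial (Fin 9) ℚ
  set J : Ideal R := Ideal.span
      {X 0 * X 1, X 0 * X 2 + X 1 * X 3, X 1 * X 6 + X 3 * X 5, X 3 * X 4 + X 5 * X 7,
        X 5 * X 8} with hJ
  have hmemJ : ∀ p ∈ ({X 0 * X 1, X 0 * X 2 + X 1 * X 3, X 1 * X 6 + X 3 * X 5,
      X 3 * X 4 + X 5 * X 7, X 5 * X 8} : Set R), p ∈ J := fun p hp => Ideal.subset_span hp
  have h1 : (X 0 * X 1 : R) ∈ J := hmemJ _ (by simp)
  have h2 : (X 0 * X 2 + X 1 * X 3 : R) ∈ J := hmemJ _ (by simp)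
  have h3 : (X 1 * X 6 + X 3 * X 5 : R) ∈ J := hmemJ _ (by simp)
  have h4 : (X 3 * X 4 + X 5 * X 7 : R) ∈ J := hmemJ _ (by simp)
  have h5 : (X 5 * X 8 : R) ∈ J := hmemJ _ (by simp)
  -- radical memberships
  have r02 : (X 0 * X 2 : R) ∈ J.radical := by
    refine ⟨2, ?_⟩
    have : (X 0 * X 2 : R) ^ 2 =
        (X 0 * X 2) * (X 0 * X 2 + X 1 * X 3) - (X 2 * X 3) * (X 0 * X 1) := by ring
    rw [this]
    exact Ideal.sub_mem _ (Ideal.mul_mem_left _ _ h2) (Ideal.mul_mem_left _ _ h1)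
  have r13 : (X 1 * X 3 : R) ∈ J.radical := by
    have := Ideal.sub_mem _ (Ideal.le_radical h2) r02
    rwa [add_sub_cancel_left] at this
  have r16 : (X 1 * X 6 : R) ∈ J.radical := by
    rw [← Ideal.radical_idem J]
    refine ⟨2, ?_⟩
    have : (X 1 * X 6 : R) ^ 2 =
        (X 1 * X 6) * (X 1 * X 6 + X 3 * X 5) - (X 5 * X 6) * (X 1 * X 3) := by ring
    rw [this]
    exact Ideal.sub_mem _ (Ideal.mul_mem_left _ _ (Ideal.le_radical h3))
      (Ideal.mul_mem_left _ _ r13)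
  have r35 : (X 3 * X 5 : R) ∈ J.radical := by
    have := Ideal.sub_mem _ (Ideal.le_radical h3) r16
    rwa [add_sub_cancel_left] at this
  have r34 : (X 3 * X 4 : R) ∈ J.radical := by
    rw [← Ideal.radical_idem J]
    refine ⟨2, ?_⟩
    have : (X 3 * X 4 : R) ^ 2 =
        (X 3 * X 4) * (X 3 * X 4 + X 5 * X 7) - (X 4 * X 7) * (X 3 * X 5) := by ring
    rw [this]
    exact Ideal.sub_mem _ (Ideal.mul_mem_left _ _ (Ideal.le_radical h4))
      (Ideal.mul_mem_left _ _ r35)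
  have r57 : (X 5 * X 7 : R) ∈ J.radical := by
    have := Ideal.sub_mem _ (Ideal.le_radical h4) r34
    rwa [add_sub_cancel_left] at this
  have key : Ideal.radical I = Ideal.radical J := by
    apply le_antisymm
    · rw [Ideal.radical_le_radical_iff, hI, Ideal.span_le]
      rintro p hp
      simp only [Set.mem_insert_iff, Set.mem_singleton_iff] at hp
      rcases hp with rfl|rfl|rfl|rfl|rfl|rfl|rfl|rfl
      · exact Ideal.le_radical h1
      · exact r02
      · exact r13
      · exact r34
      · exact r35
      · exact r16
      · exact r57
      · exact Ideal.le_radical h5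
    · rw [Ideal.radical_le_radical_iff, hJ, Ideal.span_le, hI]
      rintro p hp
      simp only [Set.mem_insert_iff, Set.mem_singleton_iff] at hp
      have hmemI : ∀ q ∈ ({X 0 * X 1, X 0 * X 2, X 1 * X 3, X 3 * X 4, X 3 * X 5, X 1 * X 6,
          X 5 * X 7, X 5 * X 8} : Set R), q ∈ Ideal.span ({X 0 * X 1, X 0 * X 2, X 1 * X 3,
          X 3 * X 4, X 3 * X 5, X 1 * X 6, X 5 * X 7, X 5 * X 8} : Set R) :=
        fun q hq => Ideal.subset_span hq
      rcases hp with rfl|rfl|rfl|rfl|rfl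
      · exact Ideal.le_radical (hmemI _ (by simp))
      · exact Ideal.le_radical (Ideal.add_mem _ (hmemI _ (by simp)) (hmemI _ (by simp)))
      · exact Ideal.le_radical (Ideal.add_mem _ (hmemI _ (by simp)) (hmemI _ (by simp)))
      · exact Ideal.le_radical (Ideal.add_mem _ (hmemI _ (by simp)) (hmemI _ (by simp)))
      · exact Ideal.le_radical (hmemI _ (by simp))
  refine ⟨key, ?_⟩
  apply Nat.sInf_le
  refine ⟨![X 0 * X 1, X 0 * X 2 + X 1 * X 3, X 1 * X 6 + X 3 * X 5, X 3 * X 4 + X 5 * X 7,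
      X 5 * X 8], ?_⟩
  have hrange : Set.range ![X 0 * X 1, X 0 * X 2 + X 1 * X 3, X 1 * X 6 + X 3 * X 5,
      X 3 * X 4 + X 5 * X 7, (X 5 * X 8 : R)] =
      {X 0 * X 1, X 0 * X 2 + X 1 * X 3, X 1 * X 6 + X 3 * X 5, X 3 * X 4 + X 5 * X 7,
        X 5 * X 8} := by
    ext p
    constructor
    · rintro ⟨i, rfl⟩
      fin_cases i <;> simp
    · intro hp
      simp only [Set.mem_insert_iff, Set.mem_singleton_iff] at hp
      rcases hp with rfl|rfl|rfl|rfl|rfl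
      · exact ⟨0, rfl⟩
      · exact ⟨1, rfl⟩
      · exact ⟨2, rfl⟩
      · exact ⟨3, rfl⟩
      · exact ⟨4, rfl⟩
  rw [hrange, ← hJ, key]
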